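/- arXiv:1810.07688 — 3 statements merged into one kernel-verified Lean document; each statement's English description precedes it below -/
import Mathlib

section
/- Let X be a nondegenerate indecomposable continuum. Then every composant of X is a first-category (meager) subset of X. -/
/-- The composant of a point `x`: the union of all proper subcontinua containing `x`. -/
def composant {X : Type*} [TopologicalSpace X] (x : X) : Set X :=
  ⋃₀ {K : Set X | IsCompact K ∧ IsConnected K ∧ K ≠ Set.univ ∧ x ∈ K}

/-- A continuum (viewed as a whole space) is indecomposable if it is not the union
of two proper subcontinua. -/
def IndecomposableSpace (X : Type*) [TopologicalSpace X] : Prop :=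
  ¬ ∃ K L : Set X, IsCompact K ∧ IsConnected K ∧ K ≠ Set.univ ∧
      IsCompact L ∧ IsConnected L ∧ L ≠ Set.univ ∧ K ∪ L = Set.univ

open Set

/-- Boundary bumping: in a compact connected T2 space, the connected component of a point
in a proper closed subset meets the frontier of that subset. -/
lemma bb_aux {X : Type*} [TopologicalSpace X] [CompactSpace X] [T2Space X]
    [PreconnectedSpace X] {F : Set X} (hF : IsClosed F) (hFne : F ≠ Set.univ)
    {p : X} (hp : p ∈ F) :
    (connectedComponentIn F p ∩ frontier F).Nonempty := by
  by_contra h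
  rw [Set.not_nonempty_iff_eq_empty] at h
  haveI : CompactSpace F := isCompact_iff_compactSpace.mp hF.isCompact
  set q : F := ⟨p, hp⟩ with hq
  have hcc : connectedComponentIn F p = Subtype.val '' connectedComponent q :=
    connectedComponentIn_eq_image hp
  set B : Set F := Subtype.val ⁻¹' frontier F with hBdef
  have hBclosed : IsClosed B := isClosed_frontier.preimage continuous_subtype_val
  have hdisj : B ∩ ⋂ s : { s : Set F // IsClopen s ∧ q ∈ s }, (s : Set F) = ∅ := by
    rw [← connectedComponent_eq_iInter_isClopen q]
    ext z
    simp only [mem_inter_iff, mem_empty_iff_false, iff_false, not_and]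
    intro hzB hzcc
    have : (z : X) ∈ connectedComponentIn F p ∩ frontier F := by
      refine ⟨?_, hzB⟩
      rw [hcc]; exact ⟨z, hzcc, rfl⟩
    rw [h] at this
    exact this
  obtain ⟨u, hu⟩ := hBclosed.isCompact.elim_finite_subfamily_closed
    (fun s : { s : Set F // IsClopen s ∧ q ∈ s } => (s : Set F)) (fun s => s.2.1.1) hdisj
  set U : Set F := ⋂ i ∈ u, (i : Set F) with hUdef
  have hUclopen : IsClopen U := isClopen_biInter_finset fun i _ => i.2.1
  have hqU : q ∈ U := mem_iInter₂.mpr fun i _ => i.2.2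
  have hUB : U ∩ B = ∅ := by rw [inter_comm]; exact hu
  set V : Set X := Subtype.val '' U with hVdef
  have hVF : V ⊆ F := by rintro v ⟨z, _, rfl⟩; exact z.2
  have hVfr : ∀ v ∈ V, v ∉ frontier F := by
    rintro v ⟨z, hz, rfl⟩ hvfr
    have : z ∈ U ∩ B := ⟨hz, hvfr⟩
    rw [hUB] at this; exact this
  have hVint : V ⊆ interior F := by
    intro v hv
    have hvF : v ∈ F := hVF hv
    have := hVfr v hv
    rw [hF.frontier_eq] at this
    by_contra hnot
    exact this ⟨hvF, hnot⟩
  have hVclosed : IsClosed V := ((hUclopen.1.isCompact).image continuous_subtype_val).isClosed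
  have hVopen : IsOpen V := by
    obtain ⟨W, hW, hWU⟩ := isOpen_induced_iff.mp hUclopen.2
    have hVeq : V = W ∩ interior F := by
      apply Subset.antisymm
      · rintro v ⟨z, hz, rfl⟩
        refine ⟨?_, hVint ⟨z, hz, rfl⟩⟩
        rw [← hWU] at hz; exact hz
      · rintro w ⟨hwW, hwint⟩
        have hwF : w ∈ F := interior_subset hwint
        refine ⟨⟨w, hwF⟩, ?_, rfl⟩
        rw [← hWU]; exact hwW
    rw [hVeq]; exact hW.inter isOpen_interior
  have hVne : V.Nonempty := ⟨p, ⟨q, hqU, rfl⟩⟩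
  have : V = univ := IsClopen.eq_univ ⟨hVclosed, hVopen⟩ hVne
  exact hFne (eq_univ_of_univ_subset (this ▸ hVF))

/-- In an indecomposable continuum, every proper subcontinuum has empty interior. -/
lemma interior_empty_of_indecomposable {X : Type*} [TopologicalSpace X] [CompactSpace X]
    [T2Space X] [ConnectedSpace X] (hX : IndecomposableSpace X) {K : Set X}
    (hKc : IsCompact K) (hKconn : IsConnected K) (hK : K ≠ Set.univ) :
    interior K = ∅ := by
  by_contra hU
  rw [← Ne, ← nonempty_iff_ne_empty] at hU
  have hKclosed : IsClosed K := hKc.isClosed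
  set F : Set X := closure Kᶜ with hFdef
  have hFclosed : IsClosed F := isClosed_closure
  have hKcne : Kᶜ.Nonempty := nonempty_compl.mpr hK
  have hFne : F.Nonempty := hKcne.mono subset_closure
  have hUF : interior K ∩ F = ∅ := by
    have h1 : interior K ∩ Kᶜ = ∅ := by
      rw [Set.eq_empty_iff_forall_notMem]
      rintro z ⟨hz1, hz2⟩
      exact hz2 (interior_subset hz1)
    have h2 : interior K ∩ closure Kᶜ ⊆ closure (interior K ∩ Kᶜ) :=
      isOpen_interior.inter_closure
    rw [h1, closure_empty] at h2
    exact h2.antisymm (empty_subset _)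
  have hFneuniv : F ≠ univ := by
    intro hFu
    obtain ⟨z, hz⟩ := hU
    have : z ∈ interior K ∩ F := ⟨hz, hFu ▸ mem_univ z⟩
    rw [hUF] at this; exact this
  -- the frontier of F is contained in K
  have hfrK : frontier F ⊆ K := by
    intro z hz
    by_contra hzK
    have hzF : z ∈ interior F :=
      interior_maximal subset_closure (hKclosed.isOpen_compl) (by exact hzK)
    exact hz.2 hzF
  -- covering: K ∪ F = univ
  have hcover : K ∪ F = univ := by
    apply eq_univ_of_forall
    intro z
    by_cases hz : z ∈ K
    · exact Or.inl hz
    · exact Or.inr (subset_closure hz)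
  -- Kᶜ is dense in F: every relatively open nonempty subset of F meets Kᶜ
  have hdense : ∀ v : Set X, IsOpen v → (F ∩ v).Nonempty → (v ∩ Kᶜ).Nonempty := by
    rintro v hv ⟨z, hzF, hzv⟩
    have : z ∈ closure Kᶜ := hzF
    rw [mem_closure_iff] at this
    exact this v hv hzv
  by_cases hFconn : IsPreconnected F
  · exact hX ⟨K, F, hKc, hKconn, hK, hFclosed.isCompact, ⟨hFne, hFconn⟩, hFneuniv, hcover⟩
  · -- F is disconnected: split into A and B
    rw [IsPreconnected] at hFconn
    push_neg at hFconn
    obtain ⟨uu, vv, huu, hvv, hcov, hu1, hv1, hempty⟩ := hFconn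
    set A : Set X := F ∩ vvᶜ with hAdef
    set B : Set X := F ∩ uuᶜ with hBdef
    have hAeq : A = F ∩ uu := by
      apply Subset.antisymm
      · rintro z ⟨hzF, hzv⟩
        rcases hcov hzF with hz | hz
        · exact ⟨hzF, hz⟩
        · exact absurd hz hzv
      · rintro z ⟨hzF, hzu⟩
        refine ⟨hzF, fun hzv => ?_⟩
        have : z ∈ F ∩ (uu ∩ vv) := ⟨hzF, hzu, hzv⟩
        rw [hempty] at this; exact this
    have hBeq : B = F ∩ vv := by
      apply Subset.antisymm
      · rintro z ⟨hzF, hzu⟩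
        rcases hcov hzF with hz | hz
        · exact absurd hz hzu
        · exact ⟨hzF, hz⟩
      · rintro z ⟨hzF, hzv⟩
        refine ⟨hzF, fun hzu => ?_⟩
        have : z ∈ F ∩ (uu ∩ vv) := ⟨hzF, hzu, hzv⟩
        rw [hempty] at this; exact this
    have hAclosed : IsClosed A := hFclosed.inter (isClosed_compl_iff.mpr hvv)
    have hBclosed : IsClosed B := hFclosed.inter (isClosed_compl_iff.mpr huu)
    have hABF : A ∪ B = F := by
      apply Subset.antisymm
      · exact union_subset inter_subset_left inter_subset_left
      · intro z hz
        rcases hcov hz with h | h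
        · left; rw [hAeq]; exact ⟨hz, h⟩
        · right; rw [hBeq]; exact ⟨hz, h⟩
    -- components within F of points of A stay in A and meet K
    have hcompA : ∀ a ∈ A, connectedComponentIn F a ⊆ A := by
      intro a ha z hz
      have hsub : connectedComponentIn F a ⊆ F := connectedComponentIn_subset F a
      have hpre : IsPreconnected (connectedComponentIn F a) :=
        isPreconnected_connectedComponentIn
      have haC : a ∈ connectedComponentIn F a := mem_connectedComponentIn ha.1
      -- the component cannot meet vv
      have hCv : (connectedComponentIn F a ∩ vv) = ∅ := by
        by_contra hne
        rw [← Ne, ← nonempty_iff_ne_empty] at hne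
        have := hpre uu vv huu hvv (fun w hw => hcov (hsub hw))
          ⟨a, haC, (hAeq ▸ ha).2⟩ hne
        obtain ⟨w, hwC, hwu, hwv⟩ := this
        have : w ∈ F ∩ (uu ∩ vv) := ⟨hsub hwC, hwu, hwv⟩
        rw [hempty] at this; exact this
      refine ⟨hsub hz, fun hzv => ?_⟩
      have : z ∈ connectedComponentIn F a ∩ vv := ⟨hz, hzv⟩
      rw [hCv] at this; exact this
    have hcompB : ∀ b ∈ B, connectedComponentIn F b ⊆ B := by
      intro b hb z hz
      have hsub : connectedComponentIn F b ⊆ F := connectedComponentIn_subset F b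
      have hpre : IsPreconnected (connectedComponentIn F b) :=
        isPreconnected_connectedComponentIn
      have hbC : b ∈ connectedComponentIn F b := mem_connectedComponentIn hb.1
      have hCu : (connectedComponentIn F b ∩ uu) = ∅ := by
        by_contra hne
        rw [← Ne, ← nonempty_iff_ne_empty] at hne
        have := hpre uu vv huu hvv (fun w hw => hcov (hsub hw))
          hne ⟨b, hbC, (hBeq ▸ hb).2⟩
        obtain ⟨w, hwC, hwu, hwv⟩ := this
        have : w ∈ F ∩ (uu ∩ vv) := ⟨hsub hwC, hwu, hwv⟩
        rw [hempty] at this; exact this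
      refine ⟨hsub hz, fun hzu => ?_⟩
      have : z ∈ connectedComponentIn F b ∩ uu := ⟨hz, hzu⟩
      rw [hCu] at this; exact this
    obtain ⟨k₀, hk₀⟩ := hKconn.1
    -- K ∪ A is preconnected, similarly K ∪ B
    have key : ∀ S : Set X, (∀ s ∈ S, connectedComponentIn F s ⊆ S) → S ⊆ F →
        IsPreconnected (K ∪ S) := by
      intro S hS hSF
      have : K ∪ S = ⋃₀ ((insert K ((fun s => K ∪ connectedComponentIn F s) '' S))) := by
        apply Subset.antisymm
        · intro z hz
          rcases hz with hz | hz
          · exact ⟨K, Or.inl rfl, hz⟩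
          · exact ⟨K ∪ connectedComponentIn F z, Or.inr ⟨z, hz, rfl⟩,
              Or.inr (mem_connectedComponentIn (hSF hz))⟩
        · rintro z ⟨T, hT, hzT⟩
          rcases hT with rfl | ⟨s, hs, rfl⟩
          · exact Or.inl hzT
          · rcases hzT with hz | hz
            · exact Or.inl hz
            · exact Or.inr (hS s hs hz)
      rw [this]
      apply isPreconnected_sUnion k₀
      · rintro T hT
        rcases hT with rfl | ⟨s, hs, rfl⟩
        · exact hk₀
        · exact Or.inl hk₀
      · rintro T hT
        rcases hT with rfl | ⟨s, hs, rfl⟩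
        · exact hKconn.2
        · -- K ∪ connectedComponentIn F s preconnected: they meet in frontier F ⊆ K
          obtain ⟨w, hwC, hwfr⟩ := bb_aux hFclosed hFneuniv (hSF hs)
          apply IsPreconnected.union w (hfrK hwfr) hwC hKconn.2
            isPreconnected_connectedComponentIn
    have hKA : IsPreconnected (K ∪ A) := key A hcompA inter_subset_left
    have hKB : IsPreconnected (K ∪ B) := key B hcompB inter_subset_left
    -- properness
    have hApt : ∃ z, z ∈ A ∧ z ∉ K := by
      obtain ⟨z, hzu, hzK⟩ := hdense uu huu hu1
      refine ⟨z, ?_, hzK⟩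
      rw [hAeq]
      exact ⟨subset_closure hzK, hzu⟩
    have hBpt : ∃ z, z ∈ B ∧ z ∉ K := by
      obtain ⟨z, hzv, hzK⟩ := hdense vv hvv hv1
      refine ⟨z, ?_, hzK⟩
      rw [hBeq]
      exact ⟨subset_closure hzK, hzv⟩
    obtain ⟨a₁, ha₁A, ha₁K⟩ := hApt
    obtain ⟨b₁, hb₁B, hb₁K⟩ := hBpt
    apply hX
    refine ⟨K ∪ A, K ∪ B, hKc.union hAclosed.isCompact, ⟨⟨k₀, Or.inl hk₀⟩, hKA⟩, ?_,
      hKc.union hBclosed.isCompact, ⟨⟨k₀, Or.inl hk₀⟩, hKB⟩, ?_, ?_⟩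
    · -- b₁ ∉ K ∪ A
      intro hEq
      have hb₁ : b₁ ∈ K ∪ A := hEq ▸ mem_univ b₁
      rcases hb₁ with h | h
      · exact hb₁K h
      · have hh : b₁ ∈ F ∩ uu := by rw [← hAeq]; exact h
        exact hb₁B.2 hh.2
    · -- a₁ ∉ K ∪ B
      intro hEq
      have ha₁ : a₁ ∈ K ∪ B := hEq ▸ mem_univ a₁
      rcases ha₁ with h | h
      · exact ha₁K h
      · have hh : a₁ ∈ F ∩ uu := by rw [← hAeq]; exact ha₁A
        exact h.2 hh.2
    · rw [union_union_union_comm, union_self, hABF, hcover]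

theorem stmt5 {X : Type*} [MetricSpace X] [CompactSpace X] [ConnectedSpace X]
    [Nontrivial X] (hX : IndecomposableSpace X) (x : X) :
    IsMeagre (composant x) := by
  haveI : Nonempty X := ⟨x⟩
  set u : ℕ → X := TopologicalSpace.denseSeq X with hu
  set g : ℕ × ℕ → Set X :=
    fun p => connectedComponentIn (Metric.ball (u p.1) (1 / (p.2 + 1)))ᶜ x with hg
  rw [isMeagre_iff_countable_union_isNowhereDense]
  refine ⟨Set.range g, ?_, countable_range g, ?_⟩
  · rintro t ⟨⟨d, n⟩, rfl⟩
    set F : Set X := (Metric.ball (u d) (1 / (n + 1)))ᶜ with hF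
    have hFclosed : IsClosed F := Metric.isOpen_ball.isClosed_compl
    by_cases hx : x ∈ F
    · have hC : IsConnected (connectedComponentIn F x) :=
        isConnected_connectedComponentIn_iff.mpr hx
      have hsub := connectedComponentIn_subset F x
      have hFne : F ≠ univ := by
        intro h
        have h2 : u d ∈ F := h ▸ mem_univ _
        exact h2 (Metric.mem_ball_self (by positivity))
      have hclosed : IsClosed (connectedComponentIn F x) := by
        rw [connectedComponentIn_eq_image hx]
        haveI : CompactSpace F := isCompact_iff_compactSpace.mp hFclosed.isCompact
        exact ((isClosed_connectedComponent).isCompact.image continuous_subtype_val).isClosed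
      have hne : connectedComponentIn F x ≠ univ := fun h =>
        hFne (univ_subset_iff.mp (h ▸ hsub))
      show IsNowhereDense (connectedComponentIn F x)
      rw [hclosed.isNowhereDense_iff]
      exact interior_empty_of_indecomposable hX hclosed.isCompact hC hne
    · show IsNowhereDense (connectedComponentIn F x)
      rw [connectedComponentIn_eq_empty hx]
      exact isNowhereDense_empty
  · rintro y ⟨K, ⟨hKc, hKconn, hKne, hxK⟩, hyK⟩
    obtain ⟨p, hp⟩ := nonempty_compl.mpr hKne
    have hKclosed := hKc.isClosed
    obtain ⟨ε, hε, hball⟩ := Metric.isOpen_iff.mp hKclosed.isOpen_compl p hp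
    obtain ⟨n, hn⟩ := exists_nat_one_div_lt (show (0:ℝ) < ε / 2 by linarith)
    obtain ⟨d, hd⟩ := Metric.denseRange_iff.mp (TopologicalSpace.denseRange_denseSeq X) p
      (1 / (n + 1)) (by positivity)
    refine mem_sUnion.mpr ⟨g (d, n), ⟨(d, n), rfl⟩, ?_⟩
    have hKF : K ⊆ (Metric.ball (u d) (1 / (n + 1)))ᶜ := by
      intro z hz hzball
      have hzp : z ∈ Metric.ball p ε := by
        rw [Metric.mem_ball] at hzball ⊢
        have ht : dist z p ≤ dist z (u d) + dist (u d) p := dist_triangle _ _ _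
        have hd' : dist (u d) p < 1 / (n + 1) := by rw [dist_comm]; exact hd
        linarith
      exact hball hzp hz
    exact hKconn.2.subset_connectedComponentIn hxK hKF hyK
end

section
/- Let Q be a continuum and ψ: Q → P a continuous surjection onto an indecomposable continuum P. Suppose there exists a dense subset I ⊆ Q such that ψ⁻¹(ψ(x)) = {x} for all x ∈ I. Then Q is indecomposable. -/
private lemma aux10 {Q P : Type*} [MetricSpace Q] [CompactSpace Q]
    [MetricSpace P]
    (ψ : Q → P)
    (I : Set Q) (hI : Dense I) (hsing : ∀ x ∈ I, ψ ⁻¹' {ψ x} = {x})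
    (K L : Set Q) (hLc : IsCompact L) (hLne : L ≠ Set.univ)
    (hU : K ∪ L = Set.univ) (hLim : ψ '' L = Set.univ) : False := by
  -- K \ L is open and nonempty
  have hLclosed : IsClosed L := hLc.isClosed
  have hopen : IsOpen Lᶜ := hLclosed.isOpen_compl
  have hne : Lᶜ.Nonempty := Set.nonempty_compl.mpr hLne
  obtain ⟨x, hxI, hxL⟩ := hI.exists_mem_open hopen hne
  have hx : ψ x ∈ ψ '' L := by rw [hLim]; trivial
  obtain ⟨y, hyL, hyx⟩ := hx
  have : y ∈ ψ ⁻¹' {ψ x} := by simpa using hyx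
  rw [hsing x hxI] at this
  rw [this] at hyL
  exact hxL hyL

theorem stmt10 {Q P : Type*} [MetricSpace Q] [CompactSpace Q] [ConnectedSpace Q]
    [MetricSpace P] [CompactSpace P] [ConnectedSpace P]
    (ψ : Q → P) (hc : Continuous ψ) (hs : Function.Surjective ψ)
    (hP : IndecomposableSpace P)
    (I : Set Q) (hI : Dense I) (hsing : ∀ x ∈ I, ψ ⁻¹' {ψ x} = {x}) :
    IndecomposableSpace Q := by
  rintro ⟨K, L, hKc, hKconn, hKne, hLc, hLconn, hLne, hU⟩
  have hKi : IsCompact (ψ '' K) := hKc.image hc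
  have hLi : IsCompact (ψ '' L) := hLc.image hc
  have hKic : IsConnected (ψ '' K) := hKconn.image ψ hc.continuousOn
  have hLic : IsConnected (ψ '' L) := hLconn.image ψ hc.continuousOn
  have hUi : ψ '' K ∪ ψ '' L = Set.univ := by
    rw [← Set.image_union, hU, Set.image_univ, Set.range_eq_univ.mpr hs]
  by_cases hK : ψ '' K = Set.univ
  · exact aux10 ψ I hI hsing L K hKc hKne (by rw [Set.union_comm]; exact hU) hK
  · by_cases hL : ψ '' L = Set.univ
    · exact aux10 ψ I hI hsing K L hLc hLne hU hL
    · exact hP ⟨ψ '' K, ψ '' L, hKi, hKic, hK, hLi, hLic, hL, hUi⟩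
end

section
/- Let X be a compact metric space, g: X → X a homeomorphism, and A ⊆ X a closed set with diam(gⁿ(A)) → 0 as |n| → ∞, and assume the sets gⁿ(A), n ∈ ℤ, are pairwise disjoint. Define the relation x ∼ y iff x = y or there exists n ∈ ℤ with x, y ∈ gⁿ(A). Then ∼ is a closed equivalence relation on X (i.e., its graph is closed in X × X). -/
/-- The `n`-th iterate (n ∈ ℤ) of a homeomorphism. -/
def hiter {X : Type*} [TopologicalSpace X] (g : X ≃ₜ X) (n : ℤ) : X → X :=
  ⇑(g.toEquiv ^ n)

lemma hiter_continuous {X : Type*} [TopologicalSpace X] (g : X ≃ₜ X) (n : ℤ) :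
    Continuous (hiter g n) := by
  have h1 : ∀ m : ℕ, hiter g (m : ℤ) = (⇑g)^[m] := by
    intro m; simp only [hiter, zpow_natCast, Equiv.Perm.coe_pow]; rfl
  rcases n with m | m
  · rw [Int.ofNat_eq_coe, h1]; exact g.continuous.iterate m
  · have : hiter g (Int.negSucc m) = (⇑g.symm)^[m+1] := by
      simp only [hiter, zpow_negSucc, ← inv_pow, Equiv.Perm.coe_pow]; rfl
    rw [this]; exact g.symm.continuous.iterate (m+1)

theorem stmt13 {X : Type*} [MetricSpace X] [CompactSpace X]
    (g : X ≃ₜ X) (A : Set X) (hAcl : IsClosed A)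
    (hdisj : Pairwise fun m n : ℤ => Disjoint (hiter g m '' A) (hiter g n '' A))
    (hdiam : Filter.Tendsto (fun n : ℤ => Metric.diam (hiter g n '' A))
      Filter.cofinite (nhds 0))
    (r : X → X → Prop)
    (hr : ∀ x y, r x y ↔ (x = y ∨ ∃ n : ℤ, x ∈ hiter g n '' A ∧ y ∈ hiter g n '' A)) :
    Equivalence r ∧ IsClosed {p : X × X | r p.1 p.2} := by
  classical
  have hcomp : ∀ n : ℤ, IsCompact (hiter g n '' A) := fun n =>
    (hAcl.isCompact).image (hiter_continuous g n)
  have hclosed : ∀ n : ℤ, IsClosed (hiter g n '' A) := fun n => (hcomp n).isClosed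
  constructor
  · constructor
    · intro x; rw [hr]; exact Or.inl rfl
    · intro x y h; rw [hr] at h ⊢
      rcases h with h | ⟨n, hx, hy⟩
      · exact Or.inl h.symm
      · exact Or.inr ⟨n, hy, hx⟩
    · intro x y z hxy hyz; rw [hr] at hxy hyz ⊢
      rcases hxy with rfl | ⟨n, hx, hy⟩
      · exact hyz
      rcases hyz with rfl | ⟨m, hy', hz⟩
      · exact Or.inr ⟨n, hx, hy⟩
      by_cases hnm : n = m
      · subst hnm; exact Or.inr ⟨n, hx, hz⟩
      · exact absurd hy' (Set.disjoint_left.mp (hdisj hnm) hy)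
  · apply IsSeqClosed.isClosed
    intro u p hu hup
    simp only [Set.mem_setOf_eq, hr] at hu ⊢
    have hx : Filter.Tendsto (fun k => (u k).1) Filter.atTop (nhds p.1) :=
      ((continuous_fst.tendsto p).comp hup)
    have hy : Filter.Tendsto (fun k => (u k).2) Filter.atTop (nhds p.2) :=
      ((continuous_snd.tendsto p).comp hup)
    set P : ℕ → Prop := fun k => ∃ n : ℤ, (u k).1 ∈ hiter g n '' A ∧ (u k).2 ∈ hiter g n '' A
      with hP
    by_cases heq : {k : ℕ | (u k).1 = (u k).2}.Infinite
    · left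
      exact tendsto_nhds_unique_of_frequently_eq hx hy
        (Nat.frequently_atTop_iff_infinite.mpr heq)
    · -- eventually, P k holds
      have hPev : ∀ᶠ k in Filter.atTop, P k := by
        rw [Set.not_infinite] at heq
        have := Set.Finite.eventually_cofinite_notMem heq
        rw [Nat.cofinite_eq_atTop] at this
        filter_upwards [this] with k hk
        rcases hu k with h | h
        · exact absurd h hk
        · exact h
      by_cases hfib : ∃ n₀ : ℤ,
          {k : ℕ | (u k).1 ∈ hiter g n₀ '' A ∧ (u k).2 ∈ hiter g n₀ '' A}.Infinite
      · obtain ⟨n₀, hinf⟩ := hfib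
        have hfreq := Nat.frequently_atTop_iff_infinite.mpr hinf
        right
        exact ⟨n₀, (hclosed n₀).mem_of_frequently_of_tendsto (hfreq.mono fun k h => h.1) hx,
          (hclosed n₀).mem_of_frequently_of_tendsto (hfreq.mono fun k h => h.2) hy⟩
      · push_neg at hfib
        left
        have key : ∀ ε : ℝ, 0 < ε → dist p.1 p.2 ≤ ε := by
          intro ε hε
          have hF : {m : ℤ | ¬ Metric.diam (hiter g m '' A) < ε}.Finite :=
            Filter.eventually_cofinite.mp (hdiam.eventually (eventually_lt_nhds hε))
          -- choice of witness
          let nf : ℕ → ℤ := fun k => if h : P k then h.choose else 0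
          have hnf : ∀ k, P k →
              (u k).1 ∈ hiter g (nf k) '' A ∧ (u k).2 ∈ hiter g (nf k) '' A := by
            intro k h
            simp only [nf, dif_pos h]
            exact h.choose_spec
          have hbad : {k : ℕ | P k ∧ nf k ∈ {m : ℤ | ¬ Metric.diam (hiter g m '' A) < ε}}.Finite := by
            apply Set.Finite.subset (hF.biUnion (fun m _ =>
              hfib m))
            rintro k ⟨hk, hm⟩
            exact Set.mem_biUnion hm (hnf k hk)
          have hgood : ∀ᶠ k in Filter.atTop,
              P k ∧ Metric.diam (hiter g (nf k) '' A) < ε := by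
            have := hbad.eventually_cofinite_notMem
            rw [Nat.cofinite_eq_atTop] at this
            filter_upwards [this, hPev] with k hk hPk
            refine ⟨hPk, ?_⟩
            by_contra hd
            exact hk ⟨hPk, hd⟩
          have hdist : ∀ᶠ k in Filter.atTop, dist (u k).1 (u k).2 ≤ ε := by
            filter_upwards [hgood] with k ⟨hPk, hd⟩
            obtain ⟨h1, h2⟩ := hnf k hPk
            exact le_of_lt (lt_of_le_of_lt
              (Metric.dist_le_diam_of_mem (hcomp (nf k)).isBounded h1 h2) hd)
          exact le_of_tendsto (hx.dist hy) hdist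
        by_contra hne
        have hd0 : 0 < dist p.1 p.2 := dist_pos.mpr hne
        have := key (dist p.1 p.2 / 2) (by linarith)
        linarith
end
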